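/- If q satisfies (q∘γ)·(γ')² = q for a Möbius transformation γ, then B_q[F,G]∘γ = B_q[(F∘γ)/γ', (G∘γ)/γ']. -/

import Mathlib

/-- The bilinear form `B_q[F,G] = F''G + FG'' − F'G' + 2qFG`. -/
noncomputable def Bform (q F G : ℂ → ℂ) (z : ℂ) : ℂ :=
  deriv (deriv F) z * G z + F z * deriv (deriv G) z
    - deriv F z * deriv G z + 2 * q z * F z * G z

lemma moeb_hasDeriv (a b c d : ℂ) (habcd : a * d - b * c = 1)
    (γ : ℂ → ℂ) (hγ : γ = fun z => (a * z + b) / (c * z + d)) :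
    ∀ w, c * w + d ≠ 0 → HasDerivAt γ (((c * w + d) ^ 2)⁻¹) w := by
  intro w hw
  have h1 : HasDerivAt (fun z : ℂ => a * z + b) a w := by
    simpa using ((hasDerivAt_id w).const_mul a).add_const b
  have h2 : HasDerivAt (fun z : ℂ => c * z + d) c w := by
    simpa using ((hasDerivAt_id w).const_mul c).add_const d
  have h : HasDerivAt (fun z : ℂ => (a * z + b) / (c * z + d))
      ((a * (c * w + d) - (a * w + b) * c) / (c * w + d) ^ 2) w := h1.div h2 hw
  rw [hγ]
  convert h using 1
  have hnum : a * (c * w + d) - (a * w + b) * c = 1 := by linear_combination habcd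
  rw [hnum]
  rw [inv_eq_one_div]

lemma moeb_key (a b c d : ℂ) (habcd : a * d - b * c = 1)
    (F : ℂ → ℂ) (hF : Differentiable ℂ F)
    (γ : ℂ → ℂ) (hγ : γ = fun z => (a * z + b) / (c * z + d)) :
    ∀ z, c * z + d ≠ 0 →
      (F (γ z) / deriv γ z = F (γ z) * (c * z + d) ^ 2
      ∧ deriv (fun w => F (γ w) / deriv γ w) z
          = deriv F (γ z) + 2 * c * (c * z + d) * F (γ z))
      ∧ deriv (deriv (fun w => F (γ w) / deriv γ w)) z
          = deriv (deriv F) (γ z) * ((c * z + d) ^ 2)⁻¹ + 2 * c ^ 2 * F (γ z)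
            + 2 * c * (c * z + d) * (deriv F (γ z) * ((c * z + d) ^ 2)⁻¹) := by
  have hγd := moeb_hasDeriv a b c d habcd γ hγ
  have hderiv : ∀ w, c * w + d ≠ 0 → deriv γ w = ((c * w + d) ^ 2)⁻¹ :=
    fun w hw => (hγd w hw).deriv
  have hF' : Differentiable ℂ (deriv F) := by
    have hA : AnalyticOnNhd ℂ F Set.univ := fun z _ => hF.analyticAt z
    exact fun z => (hA.deriv z (Set.mem_univ z)).differentiableAt
  set U : Set ℂ := {w | c * w + d ≠ 0} with hUdef
  have hUo : IsOpen U := by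
    have : Continuous fun w : ℂ => c * w + d := by continuity
    exact isOpen_compl_singleton.preimage this
  set H : ℂ → ℂ := fun w => F (γ w) * (c * w + d) ^ 2 with hHdef
  set H1 : ℂ → ℂ := fun w => deriv F (γ w) + 2 * c * (c * w + d) * F (γ w) with hH1def
  -- eventual equality
  have heqU : ∀ z ∈ U, (fun w => F (γ w) / deriv γ w) =ᶠ[nhds z] H := by
    intro z hz
    filter_upwards [hUo.mem_nhds hz] with w hw
    have hw2 : c * w + d ≠ 0 := hw
    rw [hderiv w hw, div_eq_mul_inv, inv_inv]
  -- derivative of H on U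
  have hsq : ∀ w : ℂ, HasDerivAt (fun w => (c * w + d) ^ 2) (2 * (c * w + d) * c) w := by
    intro w
    have h2 : HasDerivAt (fun z : ℂ => c * z + d) c w := by
      simpa using ((hasDerivAt_id w).const_mul c).add_const d
    have h3 : HasDerivAt (fun w => (c * w + d) ^ 2) _ w := h2.pow 2
    simpa using h3
  have hHd : ∀ w ∈ U, HasDerivAt H (H1 w) w := by
    intro w hw
    have hFc : HasDerivAt (fun w => F (γ w)) (deriv F (γ w) * ((c * w + d) ^ 2)⁻¹) w :=
      (hF.differentiableAt.hasDerivAt).comp w (hγd w hw)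
    have hw2 : c * w + d ≠ 0 := hw
    have : HasDerivAt H _ w := hFc.mul (hsq w)
    convert this using 1
    field_simp
    ring
  have hdH : ∀ w ∈ U, deriv (fun w => F (γ w) / deriv γ w) w = H1 w := by
    intro w hw
    rw [(heqU w hw).deriv_eq, (hHd w hw).deriv]
  intro z hz
  have hz' : z ∈ U := hz
  refine ⟨⟨by rw [hderiv z hz, div_eq_mul_inv, inv_inv], hdH z hz'⟩, ?_⟩
  -- second derivative
  have hd1eq : deriv (fun w => F (γ w) / deriv γ w) =ᶠ[nhds z] H1 := by
    filter_upwards [hUo.mem_nhds hz'] with w hw using hdH w hw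
  rw [hd1eq.deriv_eq]
  have hF2 : HasDerivAt (fun w => deriv F (γ w))
      (deriv (deriv F) (γ z) * ((c * z + d) ^ 2)⁻¹) z :=
    (hF'.differentiableAt.hasDerivAt).comp z (hγd z hz)
  have hlin : HasDerivAt (fun w : ℂ => 2 * c * (c * w + d)) (2 * c * c) z := by
    have h2 : HasDerivAt (fun z : ℂ => c * z + d) c z := by
      simpa using ((hasDerivAt_id z).const_mul c).add_const d
    simpa using h2.const_mul (2 * c)
  have hFc : HasDerivAt (fun w => F (γ w)) (deriv F (γ z) * ((c * z + d) ^ 2)⁻¹) z :=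
    (hF.differentiableAt.hasDerivAt).comp z (hγd z hz)
  have hH1d := hF2.add (hlin.mul hFc)
  have hH1d' : HasDerivAt H1 _ z := hH1d
  rw [hH1d'.deriv]
  ring

/-- If `q` has weight 4 under a Möbius transformation `γ`, then
`B_q[F,G] ∘ γ = B_q[(F∘γ)/γ', (G∘γ)/γ']`. -/
theorem Bform_moebius_invariance (a b c d : ℂ) (habcd : a * d - b * c = 1)
    (q F G : ℂ → ℂ) (hq : Differentiable ℂ q)
    (hF : Differentiable ℂ F) (hG : Differentiable ℂ G)
    (γ : ℂ → ℂ) (hγ : γ = fun z => (a * z + b) / (c * z + d))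
    (hq4 : ∀ z, c * z + d ≠ 0 → q (γ z) * (deriv γ z) ^ 2 = q z) :
    ∀ z, c * z + d ≠ 0 →
      Bform q F G (γ z)
        = Bform q (fun w => F (γ w) / deriv γ w) (fun w => G (γ w) / deriv γ w) z := by
  intro z hz
  obtain ⟨⟨hFv, hF1⟩, hF2⟩ := moeb_key a b c d habcd F hF γ hγ z hz
  obtain ⟨⟨hGv, hG1⟩, hG2⟩ := moeb_key a b c d habcd G hG γ hγ z hz
  have hderiv : deriv γ z = ((c * z + d) ^ 2)⁻¹ :=
    (moeb_hasDeriv a b c d habcd γ hγ z hz).deriv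
  have hqz : q z = q (γ z) * (((c * z + d) ^ 2)⁻¹) ^ 2 := by
    rw [← hq4 z hz, hderiv]
  simp only [Bform]
  rw [hF1, hF2, hG1, hG2, hFv, hGv, hqz]
  have hzz : (c * z + d) ^ 2 ≠ 0 := pow_ne_zero 2 hz
  field_simp
  ring
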